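/- Let n ≥ 2 and m ≥ 2n, and let M be a set of m items. There exists a valuation v : 2^M → ℝ≥0 (one can take a unit-demand valuation, identical for all agents) such that if each of the n agents receives the renamed valuation v^{π_i}, where π₁, ..., π_n are independent uniformly random permutations of M, then the probability that no envy-free allocation of M among the n agents exists is at least min(n²/(8m), 1/8). -/

import Mathlib

/-- `A` is an allocation of the set `S` of items among `n` agents. -/
def IsAllocation {M : Type*} [DecidableEq M] {n : ℕ} (A : Fin n → Finset M) (S : Finset M) :
    Prop :=
  (∀ i j : Fin n, i ≠ j → Disjoint (A i) (A j)) ∧ Finset.univ.biUnion A = S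

section MyAux

variable {M : Type*} [Fintype M] [DecidableEq M]

def permPointEquiv (x₀ : M) : Equiv.Perm M ≃ M × {σ : Equiv.Perm M // σ x₀ = x₀} where
  toFun σ := ⟨σ x₀, ⟨σ.trans (Equiv.swap x₀ (σ x₀)), by simp⟩⟩
  invFun p := p.2.1.trans (Equiv.swap x₀ p.1)
  left_inv σ := by
    ext y
    simp [Equiv.swap_apply_self]
  right_inv p := by
    obtain ⟨y, σ, hσ⟩ := p
    refine Prod.ext ?_ ?_
    · simp [hσ]
    · apply Subtype.ext
      ext z
      simp [hσ, Equiv.swap_apply_self]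

def injTupleEquiv (x₀ : M) (n : ℕ) :
    {π : Fin n → Equiv.Perm M // Function.Injective fun i => (π i) x₀} ≃
      (Fin n ↪ M) × (Fin n → {σ : Equiv.Perm M // σ x₀ = x₀}) where
  toFun p := ⟨⟨fun i => (p.1 i) x₀, p.2⟩,
    fun i => ⟨(p.1 i).trans (Equiv.swap x₀ ((p.1 i) x₀)), by simp⟩⟩
  invFun q := ⟨fun i => (q.2 i).1.trans (Equiv.swap x₀ (q.1 i)), by
    intro a b hab
    apply q.1.injective
    simpa [(q.2 a).2, (q.2 b).2] using hab⟩
  left_inv p := by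
    apply Subtype.ext
    funext i
    ext y
    simp [Equiv.swap_apply_self]
  right_inv q := by
    refine Prod.ext ?_ ?_
    · apply Function.Embedding.ext
      intro i
      simp [(q.2 i).2]
    · funext i
      apply Subtype.ext
      ext y
      simp [(q.2 i).2, Equiv.swap_apply_self]

lemma my_exp_bound (t : ℝ) (ht : 0 ≤ t) : Real.exp (-t) ≤ 1 - min (t/2) (1/2) := by
  rcases le_or_gt t 1 with h | h
  · rw [min_eq_left (by linarith)]
    have h1 : Real.exp (-t) * Real.exp t = 1 := by rw [← Real.exp_add]; simp
    have h2 : 1 + t ≤ Real.exp t := by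
      have := Real.add_one_le_exp t; linarith
    have h3 : (0:ℝ) < Real.exp (-t) := Real.exp_pos _
    nlinarith [mul_le_mul_of_nonneg_left h2 h3.le, mul_nonneg ht (by linarith : (0:ℝ) ≤ 1 - t)]
  · rw [min_eq_right (by linarith)]
    have h1 : Real.exp (-t) ≤ Real.exp (-1) := Real.exp_le_exp.mpr (by linarith)
    have h2 : (2:ℝ) ≤ Real.exp 1 := by
      have := Real.add_one_le_exp 1; linarith
    have h3 : Real.exp (-1) ≤ 1/2 := by
      rw [Real.exp_neg, ← one_div]
      exact one_div_le_one_div_of_le (by norm_num) h2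
    linarith

lemma my_descFactorial_bound (n m : ℕ) (hn : 2 ≤ n) (hm : 2 * n ≤ m) :
    (Nat.descFactorial m n : ℝ) ≤ (1 - min ((n:ℝ)^2/(8*m)) (1/8)) * (m:ℝ)^n := by
  have hm0 : (0:ℝ) < m := by
    have : (0:ℕ) < m := by omega
    exact_mod_cast this
  have hn2 : (2:ℝ) ≤ n := by exact_mod_cast hn
  have hnm : (n:ℝ) ≤ m := by
    have : n ≤ m := by omega
    exact_mod_cast this
  set t : ℝ := (n * (n - 1)) / (2 * m) with ht_def
  have ht0 : 0 ≤ t := by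
    apply div_nonneg _ (by linarith)
    nlinarith
  have hcast : (Nat.descFactorial m n : ℝ) = ∏ i ∈ Finset.range n, ((m:ℝ) - i) := by
    rw [Nat.descFactorial_eq_prod_range, Nat.cast_prod]
    refine Finset.prod_congr rfl fun i hi => ?_
    have : i ≤ m := by
      have := Finset.mem_range.mp hi; omega
    rw [Nat.cast_sub this]
  have hprod : ∏ i ∈ Finset.range n, ((m:ℝ) - i) ≤ (m:ℝ)^n * Real.exp (-t) := by
    have step : ∏ i ∈ Finset.range n, ((m:ℝ) - i) ≤
        ∏ i ∈ Finset.range n, ((m:ℝ) * Real.exp (-(i:ℝ)/m)) := by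
      refine Finset.prod_le_prod (fun i hi => ?_) (fun i hi => ?_)
      · have : (i:ℝ) ≤ m := by
          have := Finset.mem_range.mp hi
          have : (i:ℝ) ≤ n := by exact_mod_cast Nat.le_of_lt (Finset.mem_range.mp hi)
          linarith
        linarith
      · have he : -(i:ℝ)/m + 1 ≤ Real.exp (-(i:ℝ)/m) := Real.add_one_le_exp _
        have : (m:ℝ) - i = m * (-(i:ℝ)/m + 1) := by field_simp; ring
        rw [this]
        exact mul_le_mul_of_nonneg_left he hm0.le

    have heq : ∏ i ∈ Finset.range n, ((m:ℝ) * Real.exp (-(i:ℝ)/m)) = (m:ℝ)^n * Real.exp (-t) := by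
      rw [Finset.prod_mul_distrib, Finset.prod_const, Finset.card_range, ← Real.exp_sum]
      congr 1
      have hsum : (∑ i ∈ Finset.range n, (i:ℝ)) = n * (n-1) / 2 := by
        have h2 : ((∑ i ∈ Finset.range n, i) * 2 : ℕ) = n * (n - 1) := Finset.sum_range_id_mul_two n
        have h3 : ((∑ i ∈ Finset.range n, i : ℕ) : ℝ) * 2 = (n:ℝ) * ((n:ℝ) - 1) := by
          have := congrArg (fun x : ℕ => (x : ℝ)) h2
          push_cast [Nat.cast_sub (by omega : 1 ≤ n)] at this
          push_cast
          linarith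
        push_cast at h3 ⊢
        linarith
      simp only [neg_div]
      rw [Finset.sum_neg_distrib, ← Finset.sum_div, hsum, ht_def, div_div]
    linarith [step, heq.le, heq.ge]
  have hmin : min ((n:ℝ)^2/(8*m)) (1/8) ≤ min (t/2) (1/2) := by
    apply min_le_min
    · rw [ht_def, div_div]
      rw [div_le_div_iff₀ (by positivity) (by positivity)]
      have h : (n:ℝ)*2 ≤ n*n := by nlinarith
      nlinarith [mul_le_mul_of_nonneg_right h hm0.le]
    · norm_num
  have hexp := my_exp_bound t ht0
  have : (m:ℝ)^n * Real.exp (-t) ≤ (1 - min ((n:ℝ)^2/(8*m)) (1/8)) * (m:ℝ)^n := by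
    have hmn : (0:ℝ) ≤ (m:ℝ)^n := by positivity
    nlinarith [hexp, hmin, hmn]
  linarith [hcast.le, hprod, this, hcast.ge]

end MyAux

/-- For `n ≥ 2` agents and `m ≥ 2n` items, there exists a (non-negative) valuation
`v : 2^M → ℝ≥0` such that, when each agent `i` receives the renamed valuation
`v^{π_i}(T) = v(π_i⁻¹(T))` for independent uniformly random permutations `π₁, …, πₙ`, the
probability that no envy-free allocation exists is at least `min(n²/(8m), 1/8)`.  Probability is
expressed by counting permutation profiles out of `(m!)ⁿ`. -/


theorem no_ef_whp_unit_demand {M : Type*} [Fintype M] [DecidableEq M] (n m : ℕ)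
    (hn : 2 ≤ n) (hm : 2 * n ≤ m) (hM : Fintype.card M = m) :
    ∃ v : Finset M → ℝ, (∀ S : Finset M, 0 ≤ v S) ∧
      min ((n : ℝ) ^ 2 / (8 * m)) (1 / 8) * (Nat.factorial m : ℝ) ^ n ≤
        Nat.card {π : Fin n → Equiv.Perm M //
          ¬ ∃ A : Fin n → Finset M, IsAllocation A Finset.univ ∧
            ∀ i j : Fin n,
              v ((A i).image (⇑(π i).symm)) ≥ v ((A j).image (⇑(π i).symm))} := by
  classical
  have hMpos : 0 < Fintype.card M := by omega
  obtain ⟨x₀⟩ : Nonempty M := Fintype.card_pos_iff.mp hMpos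
  refine ⟨fun S => if x₀ ∈ S then 1 else 0, fun S => by by_cases h : x₀ ∈ S <;> simp [h], ?_⟩
  -- Step 1: any non-injective profile is "bad"
  have step1 : ∀ π : Fin n → Equiv.Perm M, ¬ Function.Injective (fun i => (π i) x₀) →
      ¬ ∃ A : Fin n → Finset M, IsAllocation A Finset.univ ∧
        ∀ i j : Fin n,
          (fun S => if x₀ ∈ S then (1:ℝ) else 0) ((A i).image (⇑(π i).symm)) ≥
            (fun S => if x₀ ∈ S then (1:ℝ) else 0) ((A j).image (⇑(π i).symm)) := by
    intro π hninj ⟨A, ⟨hdisj, hcover⟩, hEF⟩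
    apply hninj
    -- show: any i has π i x₀ ∈ A i; then injectivity follows from disjointness
    have key : ∀ i : Fin n, (π i) x₀ ∈ A i := by
      intro i
      set x := (π i) x₀ with hx
      have hx_mem : x ∈ Finset.univ.biUnion A := by rw [hcover]; exact Finset.mem_univ x
      obtain ⟨k, -, hk⟩ := Finset.mem_biUnion.mp hx_mem
      have hEFik := hEF i k
      have hrhs : ((fun S => if x₀ ∈ S then (1:ℝ) else 0) ((A k).image (⇑(π i).symm))) = 1 := by
        simp only []
        rw [if_pos]
        exact Finset.mem_image.mpr ⟨x, hk, by simp [hx]⟩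
      rw [hrhs] at hEFik
      simp only [] at hEFik
      by_contra hxnot
      rw [if_neg] at hEFik
      · linarith
      · intro hmem
        obtain ⟨y, hy, hyx⟩ := Finset.mem_image.mp hmem
        have : y = x := by
          have := congrArg (π i) hyx
          simpa [hx] using this
        exact hxnot (this ▸ hy)
    intro a b hab
    by_contra hne
    have hd := hdisj a b hne
    have h1 : (π a) x₀ ∈ A a := key a
    have h2 : (π a) x₀ ∈ A b := by
      have : (π b) x₀ ∈ A b := key b
      simpa [← hab] using this
    exact Finset.disjoint_left.mp hd h1 h2
  -- Step 2: cardinality counting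
  set Bad := {π : Fin n → Equiv.Perm M //
      ¬ ∃ A : Fin n → Finset M, IsAllocation A Finset.univ ∧
        ∀ i j : Fin n,
          (fun S => if x₀ ∈ S then (1:ℝ) else 0) ((A i).image (⇑(π i).symm)) ≥
            (fun S => if x₀ ∈ S then (1:ℝ) else 0) ((A j).image (⇑(π i).symm))} with hBad_def
  set K := Fintype.card {σ : Equiv.Perm M // σ x₀ = x₀} with hK_def
  have hKpos : 0 < K := Fintype.card_pos_iff.mpr ⟨⟨Equiv.refl M, rfl⟩⟩
  have hPermCard : Fintype.card (Equiv.Perm M) = m * K := by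
    rw [Fintype.card_congr (permPointEquiv x₀), Fintype.card_prod, hM]
  have hFact : Nat.factorial m = m * K := by
    rw [← hPermCard, Fintype.card_perm, hM]
  have hInjCard : Fintype.card {π : Fin n → Equiv.Perm M //
      Function.Injective fun i => (π i) x₀} = Nat.descFactorial m n * K ^ n := by
    rw [Fintype.card_congr (injTupleEquiv x₀ n), Fintype.card_prod,
      Fintype.card_embedding_eq, Fintype.card_fun, hM, Fintype.card_fin]
  have hNinjCard : Fintype.card {π : Fin n → Equiv.Perm M //
      ¬ Function.Injective fun i => (π i) x₀} =
      (m * K) ^ n - Nat.descFactorial m n * K ^ n := by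
    rw [Fintype.card_subtype_compl, hInjCard, Fintype.card_fun, Fintype.card_fin, hPermCard]
  -- injection from non-injective profiles into Bad
  have hle : Fintype.card {π : Fin n → Equiv.Perm M //
      ¬ Function.Injective fun i => (π i) x₀} ≤ Nat.card Bad := by
    rw [← Nat.card_eq_fintype_card]
    apply Nat.card_le_card_of_injective
      (fun p : {π : Fin n → Equiv.Perm M // ¬ Function.Injective fun i => (π i) x₀} =>
        (⟨p.1, step1 p.1 p.2⟩ : Bad))
    intro p q hpq
    apply Subtype.ext
    have : ((⟨p.1, step1 p.1 p.2⟩ : Bad) : Fin n → Equiv.Perm M) =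
        ((⟨q.1, step1 q.1 q.2⟩ : Bad) : Fin n → Equiv.Perm M) := congrArg Subtype.val hpq
    exact this
  -- arithmetic
  have hsub : Nat.descFactorial m n * K ^ n ≤ (m * K) ^ n := by
    rw [mul_pow]
    exact Nat.mul_le_mul_right _ (Nat.descFactorial_le_pow m n)
  have hreal : min ((n : ℝ) ^ 2 / (8 * m)) (1 / 8) * (Nat.factorial m : ℝ) ^ n ≤
      (((m * K) ^ n - Nat.descFactorial m n * K ^ n : ℕ) : ℝ) := by
    rw [Nat.cast_sub hsub, hFact]
    push_cast
    have hkey := my_descFactorial_bound n m hn hm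
    have hKn : (0:ℝ) ≤ (K:ℝ) ^ n := by positivity
    have hmin1 : min ((n:ℝ)^2/(8*m)) (1/8) ≤ 1 := by
      apply min_le_of_right_le; norm_num
    rw [mul_pow]
    nlinarith [mul_le_mul_of_nonneg_right hkey hKn]
  calc min ((n : ℝ) ^ 2 / (8 * m)) (1 / 8) * (Nat.factorial m : ℝ) ^ n
      ≤ (((m * K) ^ n - Nat.descFactorial m n * K ^ n : ℕ) : ℝ) := hreal
    _ ≤ (Nat.card Bad : ℝ) := by
        exact_mod_cast hNinjCard ▸ hle
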